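/- If X follows a Poisson distribution with parameter λ >= 0, then for any r > 0, P(|X - λ| > r) <= 2 * exp(- r^2 / (2(λ + r))). -/

import Mathlib

open MeasureTheory


-- step 1: inner inequality g ≥ 0
lemma pois_log_ineq1 {x : ℝ} (hx : 0 ≤ x) :
    x * (x + 2) / (2 * (1 + x) ^ 2) ≤ Real.log (1 + x) := by
  set g : ℝ → ℝ := fun x => Real.log (1 + x) - x * (x + 2) / (2 * (1 + x) ^ 2) with hg
  have key : ∀ y ∈ Set.Ici (0:ℝ), HasDerivAt g (1 / (1 + y) - 1 / (1 + y) ^ 3) y := by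
    intro y hy
    have h1 : (0:ℝ) < 1 + y := by simp at hy; linarith
    have hlog : HasDerivAt (fun x : ℝ => Real.log (1 + x)) (1 / (1 + y)) y := by
      have := ((hasDerivAt_id y).const_add 1).log (ne_of_gt h1)
      simpa using this
    have hq : HasDerivAt (fun x : ℝ => x * (x + 2) / (2 * (1 + x) ^ 2)) (1 / (1 + y) ^ 3) y := by
      have hnum : HasDerivAt (fun x : ℝ => x * (x + 2)) (2 * y + 2) y := by
        have := ((hasDerivAt_id y).mul ((hasDerivAt_id y).add_const 2))
        refine this.congr_deriv ?_; simp [id]; ring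
      have hden : HasDerivAt (fun x : ℝ => 2 * (1 + x) ^ 2) (2 * (2 * (1 + y))) y := by
        have := (((hasDerivAt_id y).const_add 1).pow 2).const_mul 2
        simpa [mul_comm, mul_assoc] using this
      have hden_ne : 2 * (1 + y) ^ 2 ≠ 0 := by positivity
      have := hnum.div hden hden_ne
      refine this.congr_deriv ?_
      field_simp
      ring
    have := hlog.sub hq
    exact this
  have mono : MonotoneOn g (Set.Ici 0) := by
    apply monotoneOn_of_deriv_nonneg (convex_Ici 0)
    · exact ContinuousOn.congr (by
        fun_prop (disch := intro y hy; simp at hy ⊢; nlinarith)) (fun y hy => rfl)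
    · intro y hy
      rw [interior_Ici] at hy
      exact (key y (Set.mem_Ici.mpr (le_of_lt (Set.mem_Ioi.mp hy)))).differentiableAt.differentiableWithinAt
    · intro y hy
      rw [interior_Ici] at hy
      rw [(key y (Set.mem_Ici.mpr (le_of_lt (Set.mem_Ioi.mp hy)))).deriv]
      have h1 : (0:ℝ) < y := hy
      have h0 : (0:ℝ) < 1 + y := by linarith
      rw [sub_nonneg, div_le_div_iff₀ (by positivity) (by positivity)]
      nlinarith [sq_nonneg y, mul_pos h1 h1]
  have h0 : g 0 = 0 := by simp [hg]
  have := mono (Set.self_mem_Ici) hx hx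
  rw [h0] at this
  simpa [hg, sub_nonneg] using this

-- step 2: f ≥ 0
lemma pois_key1 {x : ℝ} (hx : 0 ≤ x) :
    x + x ^ 2 / (2 * (1 + x)) ≤ (1 + x) * Real.log (1 + x) := by
  set f : ℝ → ℝ := fun x => (1 + x) * Real.log (1 + x) - x - x ^ 2 / (2 * (1 + x)) with hf
  have key : ∀ y ∈ Set.Ici (0:ℝ), HasDerivAt f
      (Real.log (1 + y) - y * (y + 2) / (2 * (1 + y) ^ 2)) y := by
    intro y hy
    have h1 : (0:ℝ) < 1 + y := by simp at hy; linarith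
    have hlog : HasDerivAt (fun x : ℝ => Real.log (1 + x)) (1 / (1 + y)) y := by
      have := ((hasDerivAt_id y).const_add 1).log (ne_of_gt h1)
      simpa using this
    have h2 : HasDerivAt (fun x : ℝ => (1 + x) * Real.log (1 + x))
        (Real.log (1 + y) + 1) y := by
      have := ((hasDerivAt_id y).const_add 1).mul hlog
      refine this.congr_deriv ?_
      field_simp
      simp only [id_eq]
      ring
    have h3 : HasDerivAt (fun x : ℝ => x ^ 2 / (2 * (1 + x)))
        (y * (y + 2) / (2 * (1 + y) ^ 2)) y := by
      have hnum : HasDerivAt (fun x : ℝ => x ^ 2) (2 * y) y := by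
        simpa using (hasDerivAt_pow 2 y)
      have hden : HasDerivAt (fun x : ℝ => 2 * (1 + x)) 2 y := by
        have := ((hasDerivAt_id y).const_add 1).const_mul 2
        simpa using this
      have := hnum.div hden (by positivity)
      refine this.congr_deriv ?_
      field_simp
      ring
    have := (h2.sub (hasDerivAt_id y)).sub h3
    refine this.congr_deriv ?_
    simp [id]
  have mono : MonotoneOn f (Set.Ici 0) := by
    apply monotoneOn_of_deriv_nonneg (convex_Ici 0)
    · exact ContinuousOn.congr (by
        fun_prop (disch := intro y hy; simp at hy ⊢; nlinarith)) (fun y hy => rfl)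
    · intro y hy
      rw [interior_Ici] at hy
      exact (key y (Set.mem_Ici.mpr (le_of_lt (Set.mem_Ioi.mp hy)))).differentiableAt.differentiableWithinAt
    · intro y hy
      rw [interior_Ici] at hy
      rw [(key y (Set.mem_Ici.mpr (le_of_lt (Set.mem_Ioi.mp hy)))).deriv, sub_nonneg]
      exact pois_log_ineq1 (le_of_lt (Set.mem_Ioi.mp hy))
  have h0 : f 0 = 0 := by simp [hf]
  have := mono (Set.self_mem_Ici) hx hx
  rw [h0] at this
  simp only [hf] at this
  linarith

-- step 3: lower tail inequality
lemma pois_key2 {x : ℝ} (hx : 0 ≤ x) (hx1 : x < 1) :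
    -((1 - x) * Real.log (1 - x)) ≤ x - x ^ 2 / 2 := by
  set h : ℝ → ℝ := fun x => (1 - x) * Real.log (1 - x) + x - x ^ 2 / 2 with hh
  have key : ∀ y ∈ Set.Ico (0:ℝ) 1, HasDerivAt h (-Real.log (1 - y) - y) y := by
    intro y hy
    obtain ⟨hy0, hy1⟩ := hy
    have h1 : (0:ℝ) < 1 - y := by linarith
    have hlin : HasDerivAt (fun x : ℝ => 1 - x) (-1) y := by
      simpa using (hasDerivAt_id' y).const_sub (1:ℝ)
    have hlog : HasDerivAt (fun x : ℝ => Real.log (1 - x)) (-1 / (1 - y)) y :=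
      hlin.log (ne_of_gt h1)
    have h2 := hlin.mul hlog
    have hsq : HasDerivAt (fun x : ℝ => x ^ 2 / 2) y y := by
      have := (hasDerivAt_pow 2 y).div_const 2
      simpa using this
    have := (h2.add (hasDerivAt_id y)).sub hsq
    refine this.congr_deriv ?_
    field_simp
    ring
  have mono : MonotoneOn h (Set.Ico 0 1) := by
    apply monotoneOn_of_deriv_nonneg (convex_Ico 0 1)
    · exact ContinuousOn.congr (by
        fun_prop (disch := intro y hy; simp at hy ⊢; nlinarith)) (fun y hy => rfl)
    · intro y hy
      rw [interior_Ico] at hy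
      exact (key y ⟨le_of_lt hy.1, hy.2⟩).differentiableAt.differentiableWithinAt
    · intro y hy
      rw [interior_Ico] at hy
      rw [(key y ⟨le_of_lt hy.1, hy.2⟩).deriv]
      have h1 : (0:ℝ) < 1 - y := by linarith [hy.2]
      have := Real.log_le_sub_one_of_pos h1
      linarith
  have h0 : h 0 = 0 := by simp [hh]
  have := mono (by constructor <;> norm_num) ⟨hx, hx1⟩ hx
  rw [h0] at this
  simp only [hh] at this
  linarith

lemma pois_exp_series (x : ℝ) : ∑' m : ℕ, x ^ m / m.factorial = Real.exp x := by
  rw [Real.exp_eq_exp_ℝ, NormedSpace.exp_eq_tsum_div]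

lemma pois_mgf_term (lam t : ℝ) (m : ℕ) :
    (Real.exp (-lam) * lam ^ m / m.factorial) * Real.exp (t * m)
      = Real.exp (-lam) * ((lam * Real.exp t) ^ m / m.factorial) := by
  rw [mul_pow, mul_comm t (m:ℝ), Real.exp_nat_mul]
  field_simp

lemma pois_mgf_summable (lam t : ℝ) :
    Summable (fun m : ℕ => (Real.exp (-lam) * lam ^ m / m.factorial) * Real.exp (t * m)) := by
  have := (Real.summable_pow_div_factorial (lam * Real.exp t)).mul_left (Real.exp (-lam))
  apply this.congr
  intro m
  rw [pois_mgf_term]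

lemma pois_mgf_sum (lam t : ℝ) :
    ∑' m : ℕ, (Real.exp (-lam) * lam ^ m / m.factorial) * Real.exp (t * m)
      = Real.exp (lam * Real.exp t - lam) := by
  have h : ∀ m : ℕ, (Real.exp (-lam) * lam ^ m / m.factorial) * Real.exp (t * m)
      = Real.exp (-lam) * ((lam * Real.exp t) ^ m / m.factorial) := pois_mgf_term lam t
  rw [tsum_congr h, tsum_mul_left, pois_exp_series, ← Real.exp_add]
  ring_nf

lemma pois_p_nonneg {lam : ℝ} (hlam : 0 ≤ lam) (m : ℕ) :
    0 ≤ Real.exp (-lam) * lam ^ m / m.factorial := by positivity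

lemma pois_chernoff_upper {lam r t : ℝ} (hlam : 0 ≤ lam) (ht : 0 ≤ t) :
    ∑' m : ℕ, (if lam + r < (m:ℝ) then Real.exp (-lam) * lam ^ m / m.factorial else 0)
      ≤ Real.exp (lam * Real.exp t - lam - t * (lam + r)) := by
  set p : ℕ → ℝ := fun m => Real.exp (-lam) * lam ^ m / m.factorial with hp
  have hbd : ∀ m : ℕ, (if lam + r < (m:ℝ) then p m else 0)
      ≤ (p m * Real.exp (t * m)) * Real.exp (-(t * (lam + r))) := by
    intro m
    split_ifs with hc
    · have h1 : (1:ℝ) ≤ Real.exp (t * m) * Real.exp (-(t * (lam + r))) := by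
        rw [← Real.exp_add, ← Real.exp_zero]
        apply Real.exp_le_exp.mpr
        nlinarith
      calc p m = p m * 1 := by ring
        _ ≤ p m * (Real.exp (t * m) * Real.exp (-(t * (lam + r)))) :=
            mul_le_mul_of_nonneg_left h1 (pois_p_nonneg hlam m)
        _ = (p m * Real.exp (t * m)) * Real.exp (-(t * (lam + r))) := by ring
    · positivity
  have hsum : Summable (fun m : ℕ => (p m * Real.exp (t * m)) * Real.exp (-(t * (lam + r)))) :=
    (pois_mgf_summable lam t).mul_right _
  have hsum2 : Summable (fun m : ℕ => if lam + r < (m:ℝ) then p m else 0) := by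
    apply Summable.of_nonneg_of_le _ hbd hsum
    intro m
    split_ifs
    · exact pois_p_nonneg hlam m
    · exact le_refl 0
  calc ∑' m : ℕ, (if lam + r < (m:ℝ) then p m else 0)
      ≤ ∑' m : ℕ, (p m * Real.exp (t * m)) * Real.exp (-(t * (lam + r))) :=
        Summable.tsum_le_tsum hbd hsum2 hsum
    _ = (∑' m : ℕ, p m * Real.exp (t * m)) * Real.exp (-(t * (lam + r))) := tsum_mul_right
    _ = Real.exp (lam * Real.exp t - lam) * Real.exp (-(t * (lam + r))) := by
        rw [pois_mgf_sum]
    _ = Real.exp (lam * Real.exp t - lam - t * (lam + r)) := by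
        rw [← Real.exp_add]; ring_nf

lemma pois_chernoff_lower {lam r t : ℝ} (hlam : 0 ≤ lam) (ht : 0 ≤ t) :
    ∑' m : ℕ, (if (m:ℝ) < lam - r then Real.exp (-lam) * lam ^ m / m.factorial else 0)
      ≤ Real.exp (lam * Real.exp (-t) - lam + t * (lam - r)) := by
  set p : ℕ → ℝ := fun m => Real.exp (-lam) * lam ^ m / m.factorial with hp
  have hbd : ∀ m : ℕ, (if (m:ℝ) < lam - r then p m else 0)
      ≤ (p m * Real.exp (-t * m)) * Real.exp (t * (lam - r)) := by
    intro m
    split_ifs with hc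
    · have h1 : (1:ℝ) ≤ Real.exp (-t * m) * Real.exp (t * (lam - r)) := by
        rw [← Real.exp_add, ← Real.exp_zero]
        apply Real.exp_le_exp.mpr
        nlinarith
      calc p m = p m * 1 := by ring
        _ ≤ p m * (Real.exp (-t * m) * Real.exp (t * (lam - r))) :=
            mul_le_mul_of_nonneg_left h1 (pois_p_nonneg hlam m)
        _ = (p m * Real.exp (-t * m)) * Real.exp (t * (lam - r)) := by ring
    · positivity
  have hsum : Summable (fun m : ℕ => (p m * Real.exp (-t * m)) * Real.exp (t * (lam - r))) :=
    (pois_mgf_summable lam (-t)).mul_right _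
  have hsum2 : Summable (fun m : ℕ => if (m:ℝ) < lam - r then p m else 0) := by
    apply Summable.of_nonneg_of_le _ hbd hsum
    intro m
    split_ifs
    · exact pois_p_nonneg hlam m
    · exact le_refl 0
  calc ∑' m : ℕ, (if (m:ℝ) < lam - r then p m else 0)
      ≤ ∑' m : ℕ, (p m * Real.exp (-t * m)) * Real.exp (t * (lam - r)) :=
        Summable.tsum_le_tsum hbd hsum2 hsum
    _ = (∑' m : ℕ, p m * Real.exp (-t * m)) * Real.exp (t * (lam - r)) := tsum_mul_right
    _ = Real.exp (lam * Real.exp (-t) - lam) * Real.exp (t * (lam - r)) := by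
        rw [pois_mgf_sum]
    _ = Real.exp (lam * Real.exp (-t) - lam + t * (lam - r)) := by
        rw [← Real.exp_add]

open MeasureTheory

/-- Poisson tail bound: if `X ~ Poisson(λ)` with `λ ≥ 0`, then for any `r > 0`,
`P(|X - λ| > r) ≤ 2 exp(-r² / (2(λ + r)))`. -/
theorem stmt18 {Ω : Type*} [MeasurableSpace Ω] (μ : Measure Ω) [IsProbabilityMeasure μ]
    (lam : ℝ) (hlam : 0 ≤ lam) (X : Ω → ℕ)
    (hX : ∀ m : ℕ, μ {ω | X ω = m} =
      ENNReal.ofReal (Real.exp (-lam) * lam ^ m / m.factorial)) :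
    ∀ r > (0 : ℝ),
      (μ {ω | r < |(X ω : ℝ) - lam|}).toReal ≤
        2 * Real.exp (-(r ^ 2) / (2 * (lam + r))) := by
  intro r hr
  set p : ℕ → ℝ := fun m => Real.exp (-lam) * lam ^ m / m.factorial with hp
  set f : ℕ → ℝ := fun m => if r < |(m:ℝ) - lam| then p m else 0 with hf
  set fu : ℕ → ℝ := fun m => if lam + r < (m:ℝ) then p m else 0 with hfu
  set fl : ℕ → ℝ := fun m => if (m:ℝ) < lam - r then p m else 0 with hfl
  set B : ℝ := Real.exp (-(r ^ 2) / (2 * (lam + r))) with hB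
  have hBpos : 0 < B := Real.exp_pos _
  -- summability
  have hpS : Summable p := by
    have := pois_mgf_summable lam 0
    apply this.congr
    intro m; simp [hp]
  have hfnn : ∀ m, 0 ≤ f m := by
    intro m; simp only [hf]; split_ifs
    · exact pois_p_nonneg hlam m
    · exact le_refl 0
  have hfle : ∀ m, f m ≤ p m := by
    intro m; simp only [hf]; split_ifs
    · exact le_refl (p m)
    · exact pois_p_nonneg hlam m
  have hfS : Summable f := Summable.of_nonneg_of_le hfnn hfle hpS
  have hfuS : Summable fu := by
    apply Summable.of_nonneg_of_le _ _ hpS <;> intro m <;> simp only [hfu] <;> split_ifs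
    · exact pois_p_nonneg hlam m
    · exact le_refl 0
    · exact le_refl (p m)
    · exact pois_p_nonneg hlam m
  have hflS : Summable fl := by
    apply Summable.of_nonneg_of_le _ _ hpS <;> intro m <;> simp only [hfl] <;> split_ifs
    · exact pois_p_nonneg hlam m
    · exact le_refl 0
    · exact le_refl (p m)
    · exact pois_p_nonneg hlam m
  -- split
  have hsplit : ∑' m, f m ≤ (∑' m, fu m) + (∑' m, fl m) := by
    rw [← Summable.tsum_add hfuS hflS]
    apply Summable.tsum_le_tsum _ hfS (hfuS.add hflS)
    intro m
    by_cases hc : r < |(m:ℝ) - lam|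
    · rcases lt_abs.mp hc with h | h
      · have hu : lam + r < (m:ℝ) := by linarith
        have hl : ¬ ((m:ℝ) < lam - r) := by push_neg; linarith
        simp only [hf, hfu, hfl, if_pos hc, if_pos hu, if_neg hl, add_zero, le_refl]
      · have hl : (m:ℝ) < lam - r := by linarith
        have hu : ¬ (lam + r < (m:ℝ)) := by push_neg; linarith
        simp only [hf, hfu, hfl, if_pos hc, if_pos hl, if_neg hu, zero_add, le_refl]
    · simp only [hf, if_neg hc]
      have : ∀ m, 0 ≤ fu m + fl m := by
        intro m
        have h1 : 0 ≤ fu m := by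
          simp only [hfu]; split_ifs; exacts [pois_p_nonneg hlam m, le_refl 0]
        have h2 : 0 ≤ fl m := by
          simp only [hfl]; split_ifs; exacts [pois_p_nonneg hlam m, le_refl 0]
        linarith
      exact this m
  -- total bound
  have htotal : ∑' m, f m ≤ 2 * B := by
    rcases eq_or_lt_of_le hlam with hlam0 | hlampos
    · -- lam = 0
      have hzero : ∀ m, f m = 0 := by
        intro m
        simp only [hf]
        split_ifs with hc
        · cases m with
          | zero => exfalso; rw [← hlam0] at hc; norm_num at hc; linarith
          | succ n => simp [hp, ← hlam0]
        · rfl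
      rw [tsum_congr hzero, tsum_zero]
      positivity
    · -- lam > 0
      have hlamne : lam ≠ 0 := ne_of_gt hlampos
      have hlrpos : 0 < lam + r := by linarith
      have hlrne : lam + r ≠ 0 := ne_of_gt hlrpos
      have h1x : (0:ℝ) < 1 + r / lam := by positivity
      -- upper
      have hup : ∑' m, fu m ≤ B := by
        set t : ℝ := Real.log (1 + r / lam) with hT
        have ht : 0 ≤ t := Real.log_nonneg (by have := div_pos hr hlampos; linarith)
        have hexp : Real.exp t = 1 + r / lam := Real.exp_log h1x
        have hch := pois_chernoff_upper (lam := lam) (r := r) hlam ht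
        refine le_trans hch ?_
        apply Real.exp_le_exp.mpr
        have key := pois_key1 (x := r / lam) (by positivity)
        have hkey2 : r + r ^ 2 / (2 * (lam + r)) ≤ (lam + r) * t := by
          calc r + r ^ 2 / (2 * (lam + r))
              = lam * (r / lam + (r / lam) ^ 2 / (2 * (1 + r / lam))) := by
                field_simp
            _ ≤ lam * ((1 + r / lam) * Real.log (1 + r / lam)) :=
                mul_le_mul_of_nonneg_left key (le_of_lt hlampos)
            _ = (lam + r) * t := by
                rw [← hT]
                field_simp
                try ring
        have hlin : lam * Real.exp t - lam = r := by
          rw [hexp]; field_simp; ring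
        rw [hlin]
        have : -(r ^ 2) / (2 * (lam + r)) = -(r ^ 2 / (2 * (lam + r))) := by ring
        rw [this]
        linarith
      -- lower
      have hlow : ∑' m, fl m ≤ B := by
        rcases le_or_gt lam r with hcase | hcase
        · have hzero : ∀ m, fl m = 0 := by
            intro m
            simp only [hfl]
            rw [if_neg]
            push_neg
            have : (0:ℝ) ≤ (m:ℝ) := Nat.cast_nonneg m
            linarith
          rw [tsum_congr hzero, tsum_zero]
          exact le_of_lt hBpos
        · have hx1 : r / lam < 1 := (div_lt_one hlampos).mpr hcase
          have hx0 : 0 < r / lam := by positivity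
          have h1mx : (0:ℝ) < 1 - r / lam := by linarith
          set t : ℝ := -Real.log (1 - r / lam) with hT
          have ht : 0 ≤ t := by
            rw [hT, neg_nonneg]
            apply Real.log_nonpos <;> linarith
          have hexp : Real.exp (-t) = 1 - r / lam := by
            rw [hT, neg_neg, Real.exp_log h1mx]
          have hch := pois_chernoff_lower (lam := lam) (r := r) hlam ht
          refine le_trans hch ?_
          apply Real.exp_le_exp.mpr
          have key := pois_key2 (x := r / lam) (le_of_lt hx0) hx1
          have hkey2 : (lam - r) * t ≤ r - r ^ 2 / (2 * lam) := by
            calc (lam - r) * t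
                = lam * (-((1 - r / lam) * Real.log (1 - r / lam))) := by
                  rw [hT]
                  field_simp
              _ ≤ lam * (r / lam - (r / lam) ^ 2 / 2) :=
                  mul_le_mul_of_nonneg_left key (le_of_lt hlampos)
              _ = r - r ^ 2 / (2 * lam) := by
                  field_simp
          have hlin : lam * Real.exp (-t) - lam = -r := by
            rw [hexp]; field_simp; ring
          rw [hlin]
          have hmono : r ^ 2 / (2 * (lam + r)) ≤ r ^ 2 / (2 * lam) := by
            apply div_le_div_of_nonneg_left (by positivity) (by positivity)
            linarith
          have : -(r ^ 2) / (2 * (lam + r)) = -(r ^ 2 / (2 * (lam + r))) := by ring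
          rw [this]
          linarith
      linarith
  -- measure part
  have hmeas : ∀ m : ℕ, μ {ω | X ω = m ∧ r < |(m:ℝ) - lam|} = ENNReal.ofReal (f m) := by
    intro m
    by_cases hc : r < |(m:ℝ) - lam|
    · have heq : {ω | X ω = m ∧ r < |(m:ℝ) - lam|} = {ω | X ω = m} := by
        ext ω; simp [hc]
      rw [heq, hX m]
      simp only [hf, if_pos hc, hp]
    · have heq : {ω | X ω = m ∧ r < |(m:ℝ) - lam|} = (∅ : Set Ω) := by
        ext ω; simp [hc]
      rw [heq]
      simp [hf, hc]
  have hμle : μ {ω | r < |(X ω : ℝ) - lam|} ≤ ENNReal.ofReal (∑' m, f m) := by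
    have hsubset : {ω | r < |(X ω : ℝ) - lam|} ⊆
        ⋃ m : ℕ, {ω | X ω = m ∧ r < |(m:ℝ) - lam|} := by
      intro ω hω
      exact Set.mem_iUnion.mpr ⟨X ω, rfl, hω⟩
    calc μ {ω | r < |(X ω : ℝ) - lam|}
        ≤ μ (⋃ m : ℕ, {ω | X ω = m ∧ r < |(m:ℝ) - lam|}) := measure_mono hsubset
      _ ≤ ∑' m : ℕ, μ {ω | X ω = m ∧ r < |(m:ℝ) - lam|} := measure_iUnion_le _
      _ = ∑' m : ℕ, ENNReal.ofReal (f m) := tsum_congr hmeas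
      _ = ENNReal.ofReal (∑' m, f m) := (ENNReal.ofReal_tsum_of_nonneg hfnn hfS).symm
  apply ENNReal.toReal_le_of_le_ofReal (by positivity)
  exact le_trans hμle (ENNReal.ofReal_le_ofReal htotal)
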